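/- Let 0<λ<1, d=2, let A:ℝ→ℝ be Lipschitz and 1-periodic, and let b be the λ-calibrated subaction for A. Let 𝒯 be the set of turning points and Λ=∪_{n≥0} T^n(𝒯). If Λ is a finite set, then the graph of b is a union of finitely many leaves: there exists a finite set F⊆Σ such that for every x∈[0,1] there is a∈F with b(x)=S(x,a). -/

import Mathlib

open Set

noncomputable section

/-- Inverse branch `τ_i(x) = (x+i)/d` of `T(x) = dx (mod 1)`. -/
def tau (d i : ℕ) (x : ℝ) : ℝ := (x + i) / d

/-- Iterated inverse branches: `tpath d a x k = (τ_{a_k} ∘ ⋯ ∘ τ_{a_0})(x)`. -/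
def tpath (d : ℕ) (a : ℕ → ℕ) (x : ℝ) : ℕ → ℝ
  | 0 => tau d (a 0) x
  | k + 1 => tau d (a (k + 1)) (tpath d a x k)

/-- `S(x,a) = Σ_{k≥0} λ^k A(τ_{k,a} x)`. -/
def Sfun (lam : ℝ) (d : ℕ) (A : ℝ → ℝ) (x : ℝ) (a : ℕ → ℕ) : ℝ :=
  ∑' k : ℕ, lam ^ k * A (tpath d a x k)

/-- The left shift `σ` on sequences. -/
def shift (a : ℕ → ℕ) : ℕ → ℕ := fun n => a (n + 1)

/-- Strict lexicographic order on sequences. -/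
def lexLt (a b : ℕ → ℕ) : Prop := ∃ n, (∀ i < n, a i = b i) ∧ a n < b n

/-- `T(x) = dx (mod 1)`. -/
def Tmap (d : ℕ) (x : ℝ) : ℝ := Int.fract (d * x)

/-- A λ-calibrated subaction for `A`: continuous on `[0,1]`, `b 0 = b 1`, and
`b(x) = max_{i<d} (λ b(τ_i x) + A(τ_i x))` for all `x ∈ [0,1]`. -/
def IsCalibrated (lam : ℝ) (d : ℕ) (A b : ℝ → ℝ) : Prop :=
  ContinuousOn b (Icc 0 1) ∧ b 0 = b 1 ∧
    ∀ x ∈ Icc (0:ℝ) 1,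
      IsGreatest {y : ℝ | ∃ i < d, y = lam * b (tau d i x) + A (tau d i x)} (b x)

/-- The twist condition: for `a < b` lexicographically and `x ∈ (0,1)`,
`∂S/∂x(x,a) − ∂S/∂x(x,b) > 0`. -/
def Twist (lam : ℝ) (d : ℕ) (A : ℝ → ℝ) : Prop :=
  ∀ a b : ℕ → ℕ, (∀ k, a k < d) → (∀ k, b k < d) → lexLt a b →
    ∀ x ∈ Ioo (0:ℝ) 1,
      0 < deriv (fun y => Sfun lam d A y a) x - deriv (fun y => Sfun lam d A y b) x

/-- `Z(a) = Σ_k (λ/2)^k a_k`. -/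
def Zfun (lam : ℝ) (a : ℕ → ℕ) : ℝ := ∑' k : ℕ, (lam / 2) ^ k * a k

/-- `ψ_k(a) = Σ_{j=0}^{k} a_j 2^{j−k−1}`. -/
def psi (a : ℕ → ℕ) (k : ℕ) : ℝ :=
  ∑ j ∈ Finset.range (k + 1), (a j : ℝ) * (2 : ℝ) ^ ((j : ℤ) - k - 1)

/-- Concatenation `i * c`. -/
def cons (i : ℕ) (c : ℕ → ℕ) : ℕ → ℕ
  | 0 => i
  | n + 1 => c n

/-- The periodic sequence `(10)^∞ = (1,0,1,0,…)`. -/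
def seq10 : ℕ → ℕ := fun n => if n % 2 = 0 then 1 else 0

/-- The periodic sequence `(01)^∞ = (0,1,0,1,…)`. -/
def seq01 : ℕ → ℕ := fun n => n % 2

/-- The periodic sequence `(110)^∞`. -/
def seq110 : ℕ → ℕ := fun n => if n % 3 = 2 then 0 else 1

/-- The periodic sequence `(101)^∞`. -/
def seq101 : ℕ → ℕ := fun n => if n % 3 = 1 then 0 else 1

/-- The periodic sequence `(011)^∞`. -/
def seq011 : ℕ → ℕ := fun n => if n % 3 = 0 then 0 else 1


/-- greedy digit choice -/
def choice (lam : ℝ) (A b : ℝ → ℝ) (x : ℝ) : ℕ :=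
  if lam * b (tau 2 0 x) + A (tau 2 0 x) ≤ lam * b (tau 2 1 x) + A (tau 2 1 x) then 1 else 0

def orb (lam : ℝ) (A b : ℝ → ℝ) (x : ℝ) : ℕ → ℝ
  | 0 => x
  | k + 1 => tau 2 (choice lam A b (orb lam A b x k)) (orb lam A b x k)

def seqOf (lam : ℝ) (A b : ℝ → ℝ) (x : ℝ) : ℕ → ℕ :=
  fun k => choice lam A b (orb lam A b x k)

lemma choice_le_one (lam : ℝ) (A b : ℝ → ℝ) (x : ℝ) : choice lam A b x ≤ 1 := by
  unfold choice; split <;> norm_num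

lemma tau_mem {i : ℕ} (hi : i ≤ 1) {x : ℝ} (hx : x ∈ Icc (0:ℝ) 1) :
    tau 2 i x ∈ Icc (0:ℝ) 1 := by
  obtain ⟨h0, h1⟩ := hx
  have : (i:ℝ) ≤ 1 := by exact_mod_cast hi
  constructor
  · unfold tau; positivity
  · unfold tau
    rw [div_le_one (by norm_num)]
    push_cast; linarith

lemma orb_mem (lam : ℝ) (A b : ℝ → ℝ) {x : ℝ} (hx : x ∈ Icc (0:ℝ) 1) (k : ℕ) :
    orb lam A b x k ∈ Icc (0:ℝ) 1 := by
  induction k with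
  | zero => exact hx
  | succ n ih => exact tau_mem (choice_le_one lam A b _) ih

lemma tpath_orb (lam : ℝ) (A b : ℝ → ℝ) (x : ℝ) (k : ℕ) :
    tpath 2 (seqOf lam A b x) x k = orb lam A b x (k + 1) := by
  induction k with
  | zero => rfl
  | succ n ih => rw [tpath, ih]; rfl

lemma calib_choice {lam : ℝ} {A b : ℝ → ℝ} (hb : IsCalibrated lam 2 A b)
    {x : ℝ} (hx : x ∈ Icc (0:ℝ) 1) :
    b x = lam * b (tau 2 (choice lam A b x) x) + A (tau 2 (choice lam A b x) x) := by
  obtain ⟨hmem, hub⟩ := hb.2.2 x hx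
  obtain ⟨i, hi2, hieq⟩ := hmem
  have h0 : lam * b (tau 2 0 x) + A (tau 2 0 x) ≤ b x := hub ⟨0, by norm_num, rfl⟩
  have h1 : lam * b (tau 2 1 x) + A (tau 2 1 x) ≤ b x := hub ⟨1, by norm_num, rfl⟩
  unfold choice
  split
  · rename_i hle
    interval_cases i
    · linarith [hieq]
    · exact hieq
  · rename_i hlt
    push_neg at hlt
    interval_cases i
    · exact hieq
    · linarith [hieq]

lemma telescope {lam : ℝ} {A b : ℝ → ℝ} (hb : IsCalibrated lam 2 A b)
    {x : ℝ} (hx : x ∈ Icc (0:ℝ) 1) (n : ℕ) :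
    b x = (∑ k ∈ Finset.range n, lam ^ k * A (orb lam A b x (k + 1)))
      + lam ^ n * b (orb lam A b x n) := by
  induction n with
  | zero => simp [orb]
  | succ n ih =>
    have hc : b (orb lam A b x n) =
        lam * b (orb lam A b x (n + 1)) + A (orb lam A b x (n + 1)) :=
      calib_choice hb (orb_mem lam A b hx n)
    rw [Finset.sum_range_succ]
    rw [ih, hc]
    ring

lemma b_eq_Sfun {lam : ℝ} (hlam0 : 0 < lam) (hlam1 : lam < 1) {A : ℝ → ℝ}
    {K : NNReal} (hLip : LipschitzWith K A) {b : ℝ → ℝ} (hb : IsCalibrated lam 2 A b)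
    {x : ℝ} (hx : x ∈ Icc (0:ℝ) 1) :
    b x = Sfun lam 2 A x (seqOf lam A b x) := by
  obtain ⟨Mb, hMb⟩ := isCompact_Icc.exists_bound_of_continuousOn hb.1
  set f : ℕ → ℝ := fun k => lam ^ k * A (tpath 2 (seqOf lam A b x) x k) with hf
  have hAbd : ∀ y ∈ Icc (0:ℝ) 1, |A y| ≤ |A 0| + K := by
    intro y hy
    have := hLip.dist_le_mul y 0
    rw [Real.dist_eq, Real.dist_eq] at this
    have h1 : |y - 0| ≤ 1 := by
      rw [sub_zero, abs_of_nonneg hy.1]; exact hy.2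
    have h2 : |A y - A 0| ≤ K := by
      calc |A y - A 0| ≤ K * |y - 0| := this
        _ ≤ K * 1 := by
            exact mul_le_mul_of_nonneg_left h1 K.coe_nonneg
        _ = K := mul_one _
    calc |A y| = |A 0 + (A y - A 0)| := by ring_nf
      _ ≤ |A 0| + |A y - A 0| := abs_add_le _ _
      _ ≤ |A 0| + K := by linarith
  have hsummable : Summable f := by
    apply Summable.of_norm_bounded
      ((summable_geometric_of_lt_one hlam0.le hlam1).mul_right (|A 0| + K))
    intro k
    rw [hf]
    simp only [Real.norm_eq_abs, abs_mul, abs_pow, abs_of_nonneg hlam0.le]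
    apply mul_le_mul_of_nonneg_left _ (pow_nonneg hlam0.le k)
    rw [tpath_orb]
    exact hAbd _ (orb_mem lam A b hx _)
  have hpartial : ∀ n, ∑ k ∈ Finset.range n, f k = b x - lam ^ n * b (orb lam A b x n) := by
    intro n
    have := telescope hb hx n
    have hsum : ∑ k ∈ Finset.range n, f k
        = ∑ k ∈ Finset.range n, lam ^ k * A (orb lam A b x (k + 1)) := by
      apply Finset.sum_congr rfl
      intro k _
      rw [hf]; simp only; rw [tpath_orb]
    rw [hsum]; linarith
  have htend : Filter.Tendsto (fun n => ∑ k ∈ Finset.range n, f k) Filter.atTop (nhds (b x)) := by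
    have h0 : Filter.Tendsto (fun n : ℕ => lam ^ n * b (orb lam A b x n))
        Filter.atTop (nhds 0) := by
      refine squeeze_zero_norm (f := fun n : ℕ => lam ^ n * b (orb lam A b x n)) (a := fun n : ℕ => lam ^ n * Mb) ?_ ?_
      · intro n
        simp only [Real.norm_eq_abs, abs_mul, abs_pow, abs_of_nonneg hlam0.le]
        apply mul_le_mul_of_nonneg_left _ (pow_nonneg hlam0.le n)
        exact hMb _ (orb_mem lam A b hx n)
      · have := (tendsto_pow_atTop_nhds_zero_of_lt_one hlam0.le hlam1).mul_const Mb
        simpa using this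
    have : Filter.Tendsto (fun n : ℕ => b x - lam ^ n * b (orb lam A b x n))
        Filter.atTop (nhds (b x - 0)) := Filter.Tendsto.sub tendsto_const_nhds h0
    rw [sub_zero] at this
    simpa only [hpartial] using this
  have : HasSum f (b x) := (hsummable.hasSum_iff_tendsto_nat).2 htend
  exact (this.tsum_eq).symm

/-- if `Λ = ∪_{n≥0} Tⁿ(𝒯)` is finite, then the graph of `b` is the union of
finitely many leaves `S(·,a)`. -/
theorem stmt10 (lam : ℝ) (hlam0 : 0 < lam) (hlam1 : lam < 1)
    (A : ℝ → ℝ) (K : NNReal) (hLip : LipschitzWith K A) (hper : Function.Periodic A 1)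
    (b : ℝ → ℝ) (hb : IsCalibrated lam 2 A b)
    (Turn : Set ℝ)
    (hTurn : Turn = {x | x ∈ Icc (0:ℝ) 1 ∧
      b x = lam * b (tau 2 0 x) + A (tau 2 0 x) ∧
      b x = lam * b (tau 2 1 x) + A (tau 2 1 x)})
    (Lam : Set ℝ) (hLam : Lam = ⋃ n : ℕ, (Tmap 2)^[n] '' Turn)
    (hfin : Lam.Finite) :
    ∃ F : Set (ℕ → ℕ), F.Finite ∧ (∀ a ∈ F, ∀ k, a k < 2) ∧
      ∀ x ∈ Icc (0:ℝ) 1, ∃ a ∈ F, b x = Sfun lam 2 A x a := by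
  classical
  set Lam2 : Set ℝ := insert 1 Lam with hLam2
  have hfin2 : Lam2.Finite := hfin.insert 1
  have h1mem : (1:ℝ) ∈ Lam2 := mem_insert 1 Lam
  set R : ℝ → ℝ → Prop := fun x x' => uIcc x x' ⊆ Icc 0 1 \ Lam2 with hR
  -- Turn ⊆ Lam
  have hTsub : Turn ⊆ Lam := by
    rw [hLam]
    intro z hz
    exact mem_iUnion.2 ⟨0, by simpa using hz⟩
  -- Lam is forward invariant
  have hTL : ∀ z ∈ Lam, Tmap 2 z ∈ Lam := by
    rw [hLam]
    intro z hz
    obtain ⟨n, hn⟩ := mem_iUnion.1 hz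
    obtain ⟨y, hy, rfl⟩ := hn
    refine mem_iUnion.2 ⟨n + 1, ⟨y, hy, ?_⟩⟩
    rw [Function.iterate_succ_apply']
  -- the gap function
  set gap : ℝ → ℝ := fun z =>
    (lam * b (tau 2 1 z) + A (tau 2 1 z)) - (lam * b (tau 2 0 z) + A (tau 2 0 z)) with hgap
  have htaucont : ∀ i : ℕ, Continuous (tau 2 i) := by
    intro i
    unfold tau
    fun_prop
  have hgapcont : ContinuousOn gap (Icc 0 1) := by
    have hc : ∀ i : ℕ, i ≤ 1 → ContinuousOn (fun z => b (tau 2 i z)) (Icc 0 1) := by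
      intro i hi
      exact hb.1.comp ((htaucont i).continuousOn) (fun z hz => tau_mem hi hz)
    have hA : ∀ i : ℕ, ContinuousOn (fun z => A (tau 2 i z)) (Icc 0 1) :=
      fun i => (hLip.continuous.comp (htaucont i)).continuousOn
    exact (((continuousOn_const.mul (hc 1 le_rfl)).add (hA 1)).sub
      ((continuousOn_const.mul (hc 0 (by norm_num))).add (hA 0)))
  -- gap is nonzero off Lam2
  have hgapne : ∀ z ∈ Icc (0:ℝ) 1 \ Lam2, gap z ≠ 0 := by
    rintro z ⟨hz1, hz2⟩ h0
    apply hz2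
    have hzT : z ∈ Turn := by
      obtain ⟨⟨i, hi2, hieq⟩, hub⟩ := hb.2.2 z hz1
      have heq : lam * b (tau 2 0 z) + A (tau 2 0 z)
          = lam * b (tau 2 1 z) + A (tau 2 1 z) := by
        have h0' : lam * b (tau 2 1 z) + A (tau 2 1 z)
            - (lam * b (tau 2 0 z) + A (tau 2 0 z)) = 0 := h0
        linarith
      rw [hTurn]
      refine ⟨hz1, ?_, ?_⟩ <;> interval_cases i <;> first | exact hieq | linarith [hieq]
    exact mem_insert_of_mem 1 (hTsub hzT)
  -- the choice is constant along R-related points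
  have hsign : ∀ x x', R x x' → choice lam A b x = choice lam A b x' := by
    intro x x' hRxx'
    have hiff : (0 ≤ gap x) ↔ (0 ≤ gap x') := by
      have hcont : ContinuousOn gap (uIcc x x') :=
        hgapcont.mono (hRxx'.trans diff_subset)
      have hxne : gap x ≠ 0 := hgapne x (hRxx' left_mem_uIcc)
      have hx'ne : gap x' ≠ 0 := hgapne x' (hRxx' right_mem_uIcc)
      constructor
      · intro h
        by_contra h'
        push_neg at h'
        have h0 : (0:ℝ) ∈ uIcc (gap x) (gap x') := by
          rw [mem_uIcc]; right; exact ⟨h'.le, h⟩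
        obtain ⟨z, hzmem, hz0⟩ := intermediate_value_uIcc hcont h0
        exact hgapne z (hRxx' hzmem) hz0
      · intro h
        by_contra h'
        push_neg at h'
        have h0 : (0:ℝ) ∈ uIcc (gap x) (gap x') := by
          rw [mem_uIcc]; left; exact ⟨h'.le, h⟩
        obtain ⟨z, hzmem, hz0⟩ := intermediate_value_uIcc hcont h0
        exact hgapne z (hRxx' hzmem) hz0
    have hiff' : (lam * b (tau 2 0 x) + A (tau 2 0 x) ≤ lam * b (tau 2 1 x) + A (tau 2 1 x))
        ↔ (lam * b (tau 2 0 x') + A (tau 2 0 x') ≤ lam * b (tau 2 1 x') + A (tau 2 1 x')) := by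
      constructor
      · intro h
        have h1 : 0 ≤ gap x := sub_nonneg.2 h
        exact sub_nonneg.1 (hiff.1 h1)
      · intro h
        have h1 : 0 ≤ gap x' := sub_nonneg.2 h
        exact sub_nonneg.1 (hiff.2 h1)
    unfold choice
    exact if_congr hiff' rfl rfl
  -- R is preserved by the inverse branch
  have hstep : ∀ x x', R x x' →
      R (tau 2 (choice lam A b x) x) (tau 2 (choice lam A b x) x') := by
    intro x x' hRxx'
    set i := choice lam A b x with hi
    have hi1 : (i:ℝ) ≤ 1 := by exact_mod_cast choice_le_one lam A b x
    have hi0 : (0:ℝ) ≤ i := Nat.cast_nonneg i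
    intro z' hz'
    have hz'eq : z' = tau 2 i (2 * z' - i) := by
      simp only [tau]
      push_cast
      ring
    have hz : (2 * z' - i) ∈ uIcc x x' := by
      rw [mem_uIcc] at hz' ⊢
      simp only [tau] at hz'
      push_cast at hz'
      rcases hz' with ⟨h1, h2⟩ | ⟨h1, h2⟩
      · left; constructor <;> linarith
      · right; constructor <;> linarith
    obtain ⟨hzIcc, hzL⟩ := hRxx' hz
    have hzlt : 2 * z' - i < 1 := by
      rcases lt_or_eq_of_le hzIcc.2 with h | h
      · exact h
      · exact absurd (h ▸ h1mem) hzL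
    constructor
    · rw [hz'eq]; exact tau_mem (choice_le_one lam A b x) hzIcc
    · intro hmem
      rcases hmem with h | h
      · -- z' = 1, so 2*z' - i = 2 - i ≥ 1, contradiction with hzlt since i ≤ 1
        rw [h] at hzlt
        linarith
      · -- z' ∈ Lam; then Tmap 2 z' = 2z'-i ∈ Lam ⊆ Lam2, contradiction
        apply hzL
        have hT : Tmap 2 z' = 2 * z' - i := by
          have hcast : ((2:ℕ):ℝ) * z' = (2 * z' - ((i:ℕ):ℝ)) + ((i:ℕ):ℝ) := by
            push_cast; ring
          unfold Tmap
          rw [hcast, Int.fract_add_natCast]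
          exact Int.fract_eq_self.2 ⟨hzIcc.1, hzlt⟩
        rw [← hT]
        exact mem_insert_of_mem 1 (hTL z' h)
  -- orbits of R-related points remain R-related
  have horbR : ∀ x x', R x x' → ∀ k, R (orb lam A b x k) (orb lam A b x' k) := by
    intro x x' h k
    induction k with
    | zero => exact h
    | succ n ih =>
      have hc : choice lam A b (orb lam A b x' n) = choice lam A b (orb lam A b x n) :=
        (hsign _ _ ih).symm
      show R (tau 2 (choice lam A b (orb lam A b x n)) (orb lam A b x n))
        (tau 2 (choice lam A b (orb lam A b x' n)) (orb lam A b x' n))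
      rw [hc]
      exact hstep _ _ ih
  have hseqeq : ∀ x x', R x x' → seqOf lam A b x = seqOf lam A b x' := by
    intro x x' h
    funext k
    exact hsign _ _ (horbR x x' h k)
  -- finiteness of the image
  set D : Set ℝ := Icc 0 1 \ Lam2 with hD
  set fS : ℝ → Set ℝ := fun x => {p ∈ Lam2 | x < p} with hfS
  have hfR : ∀ x ∈ D, ∀ x' ∈ D, fS x = fS x' → R x x' := by
    intro x hx x' hx' hf z hz
    rw [mem_uIcc] at hz
    constructor
    · have h1 := hx.1.1; have h2 := hx.1.2; have h3 := hx'.1.1; have h4 := hx'.1.2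
      rcases hz with ⟨ha, hb'⟩ | ⟨ha, hb'⟩ <;> exact ⟨by linarith, by linarith⟩
    · intro hzL
      rcases hz with ⟨ha, hb'⟩ | ⟨ha, hb'⟩
      · have hxz : x < z := lt_of_le_of_ne ha (by rintro rfl; exact hx.2 hzL)
        have : z ∈ fS x' := hf ▸ (⟨hzL, hxz⟩ : z ∈ fS x)
        exact absurd this.2 (not_lt.2 hb')
      · have hxz : x' < z := lt_of_le_of_ne ha (by rintro rfl; exact hx'.2 hzL)
        have : z ∈ fS x := hf.symm ▸ (⟨hzL, hxz⟩ : z ∈ fS x')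
        exact absurd this.2 (not_lt.2 hb')
  have himg : (fS '' D).Finite := by
    apply hfin2.finite_subsets.subset
    rintro s ⟨x, _, rfl⟩ p hp
    exact hp.1
  set g0 : Set ℝ → (ℕ → ℕ) := fun s =>
    if h : ∃ x ∈ D, fS x = s then seqOf lam A b h.choose else fun _ => 0 with hg0
  have hDfin : (seqOf lam A b '' D).Finite := by
    apply Set.Finite.of_surjOn g0 _ himg
    rintro y ⟨x, hx, rfl⟩
    refine ⟨fS x, mem_image_of_mem _ hx, ?_⟩
    have hex : ∃ x' ∈ D, fS x' = fS x := ⟨x, hx, rfl⟩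
    simp only [hg0, dif_pos hex]
    exact hseqeq _ _ (hfR _ hex.choose_spec.1 _ hx hex.choose_spec.2)
  have hIccsplit : Icc (0:ℝ) 1 ⊆ (Icc 0 1 ∩ Lam2) ∪ D := by
    intro x hx
    by_cases h : x ∈ Lam2
    · exact Or.inl ⟨hx, h⟩
    · exact Or.inr ⟨hx, h⟩
  refine ⟨seqOf lam A b '' (Icc 0 1), ?_, ?_, ?_⟩
  · have hsub : seqOf lam A b '' (Icc 0 1)
        ⊆ seqOf lam A b '' (Icc 0 1 ∩ Lam2) ∪ seqOf lam A b '' D := by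
      rw [← image_union]
      exact image_mono hIccsplit
    exact (((hfin2.subset inter_subset_right).image _).union hDfin).subset hsub
  · rintro a ⟨x, _, rfl⟩ k
    exact Nat.lt_succ_of_le (choice_le_one lam A b _)
  · intro x hx
    exact ⟨seqOf lam A b x, mem_image_of_mem _ hx, b_eq_Sfun hlam0 hlam1 hLip hb hx⟩

end
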